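/- Let a ≥ 1 and x ≥ 0 be real numbers, and let ι ∈ [0,1]. Then min{a + x + x², x³} ≤ 3 · a^{(1-ι)/3} · x^{2+ι}. -/
import Mathlib


theorem min_bound_rpow (a x ι : ℝ) (ha : 1 ≤ a) (hx : 0 ≤ x) (hι0 : 0 ≤ ι) (hι1 : ι ≤ 1) :
    min (a + x + x ^ 2) (x ^ 3) ≤ 3 * a ^ ((1 - ι) / 3) * x ^ (2 + ι) := by
  have ha0 : (0:ℝ) < a := lt_of_lt_of_le one_pos ha
  have hE : (0:ℝ) ≤ (1 - ι) / 3 := by linarith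
  have haE : (0:ℝ) ≤ a ^ ((1 - ι) / 3) := Real.rpow_nonneg ha0.le _
  have haE1 : (1:ℝ) ≤ a ^ ((1 - ι) / 3) := Real.one_le_rpow ha hE
  rcases eq_or_lt_of_le hx with h0 | hx0
  · rw [← h0]
    rw [Real.zero_rpow (by linarith : (2:ℝ) + ι ≠ 0)]
    simp
  · rcases le_or_gt (x ^ 3) a with hc | hc
    · have hx3 : (x:ℝ) ^ 3 = x ^ ((3:ℝ)) := by
        rw [← Real.rpow_natCast x 3]; norm_num
      have key : x ^ ((1:ℝ) - ι) ≤ a ^ ((1 - ι) / 3) := by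
        have h1 : x ^ ((1:ℝ) - ι) = (x ^ (3:ℕ)) ^ ((1 - ι) / 3) := by
          rw [← Real.rpow_natCast x 3, ← Real.rpow_mul hx0.le]
          congr 1; ring
        rw [h1]
        exact Real.rpow_le_rpow (by positivity) hc hE
      calc min (a + x + x ^ 2) (x ^ 3) ≤ x ^ 3 := min_le_right _ _
        _ = x ^ ((1 - ι) + (2 + ι)) := by rw [hx3]; norm_num
        _ = x ^ (1 - ι) * x ^ (2 + ι) := Real.rpow_add hx0 _ _
        _ ≤ a ^ ((1 - ι) / 3) * x ^ (2 + ι) := by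
            gcongr
        _ ≤ 3 * a ^ ((1 - ι) / 3) * x ^ (2 + ι) := by
            have : (0:ℝ) ≤ a ^ ((1 - ι) / 3) * x ^ (2 + ι) := by positivity
            nlinarith
    · have hx1 : (1:ℝ) ≤ x := by nlinarith [sq_nonneg x, sq_nonneg (x - 1), sq_nonneg (x + 1)]
      have hxE : (1:ℝ) ≤ x ^ (2 + ι) := Real.one_le_rpow hx1 (by linarith)
      have hterm1 : a ≤ a ^ ((1 - ι) / 3) * x ^ (2 + ι) := by
        have h1 : a = a ^ ((1 - ι) / 3) * a ^ ((2 + ι) / 3) := by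
          rw [← Real.rpow_add ha0,
            show (1 - ι) / 3 + (2 + ι) / 3 = 1 by ring, Real.rpow_one]
        have h2 : a ^ ((2 + ι) / 3) ≤ x ^ (2 + ι) := by
          have h3 : a ^ ((2 + ι) / 3) ≤ (x ^ (3:ℕ)) ^ ((2 + ι) / 3) :=
            Real.rpow_le_rpow ha0.le hc.le (by linarith)
          have h4 : (x ^ (3:ℕ)) ^ ((2 + ι) / 3) = x ^ (2 + ι) := by
            rw [← Real.rpow_natCast x 3, ← Real.rpow_mul hx0.le]
            congr 1; ring
          rw [h4] at h3; exact h3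
        calc a = a ^ ((1 - ι) / 3) * a ^ ((2 + ι) / 3) := h1
          _ ≤ a ^ ((1 - ι) / 3) * x ^ (2 + ι) := by gcongr
      have hterm3 : x ^ 2 ≤ a ^ ((1 - ι) / 3) * x ^ (2 + ι) := by
        have h1 : x ^ 2 = x ^ ((2:ℝ)) := by
          rw [← Real.rpow_natCast x 2]; norm_num
        have h2 : x ^ ((2:ℝ)) ≤ x ^ (2 + ι) :=
          Real.rpow_le_rpow_of_exponent_le hx1 (by linarith)
        calc x ^ 2 ≤ x ^ (2 + ι) := by rw [h1]; exact h2
          _ = 1 * x ^ (2 + ι) := (one_mul _).symm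
          _ ≤ a ^ ((1 - ι) / 3) * x ^ (2 + ι) := by gcongr
      have hterm2 : x ≤ a ^ ((1 - ι) / 3) * x ^ (2 + ι) := by
        have : x ≤ x ^ 2 := by nlinarith
        linarith
      calc min (a + x + x ^ 2) (x ^ 3) ≤ a + x + x ^ 2 := min_le_left _ _
        _ ≤ 3 * a ^ ((1 - ι) / 3) * x ^ (2 + ι) := by linarith
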